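/- Let d ≥ 3, let β ∈ ℝ^d be nonzero, let χ be a symmetric d×d real matrix, and let α' ∈ ℝ^d, such that for all indices a, b, c ∈ {1,…,d}: β_a χ_{bc} + β_b χ_{ca} + β_c χ_{ab} = α'_a η_{bc} + α'_b η_{ca} + α'_c η_{ab}. Then there exists c₀ ∈ ℝ such that χ = c₀ η and α' = c₀ β. (This is the algebraic core of the paper's Proposition 5: in spacetime dimension m = d + 1 > 3, a nonzero mixed component β forces the slices to be totally umbilic.) -/
import Mathlib


open scoped BigOperators

noncomputable section

/-- The Minkowski bilinear form `η = diag(−1, 1, …, 1)` on `ℝ^d`. -/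
def minkowski (d : ℕ) : Matrix (Fin (d + 3)) (Fin (d + 3)) ℝ :=
  fun a b => if a = b then (if a = 0 then (-1 : ℝ) else 1) else 0

/-- algebraic core of Proposition 5 of the paper: in dimension
`d ≥ 3`, if `β ≠ 0` and `β_a χ_bc + β_b χ_ca + β_c χ_ab = α'_a η_bc + α'_b η_ca + α'_c η_ab`
for a symmetric matrix `χ`, then `χ = c₀ η` and `α' = c₀ β` for some constant `c₀`. -/
theorem umbilic_from_mixed_component
    {d : ℕ} (β : Fin (d + 3) → ℝ) (hβ : β ≠ 0)
    (χ : Matrix (Fin (d + 3)) (Fin (d + 3)) ℝ) (hχ : ∀ a b, χ a b = χ b a)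
    (α' : Fin (d + 3) → ℝ)
    (heq : ∀ a b c,
      β a * χ b c + β b * χ c a + β c * χ a b =
        α' a * minkowski d b c + α' b * minkowski d c a + α' c * minkowski d a b) :
    ∃ c₀ : ℝ, (∀ a b, χ a b = c₀ * minkowski d a b) ∧ (∀ a, α' a = c₀ * β a) := by
  classical
  obtain ⟨p, hp⟩ : ∃ p, β p ≠ 0 := by
    by_contra h
    push_neg at h
    exact hβ (funext fun a => h a)
  set E : Fin (d + 3) → ℝ := fun a => if a = 0 then (-1 : ℝ) else 1 with hE
  have hmink_diag : ∀ a, minkowski d a a = E a := by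
    intro a; simp [minkowski, hE]
  have hmink_off : ∀ a b : Fin (d + 3), a ≠ b → minkowski d a b = 0 := by
    intro a b h; simp [minkowski, h]
  -- diagonal relation : β a * χ a a = α' a * E a
  have hdiag : ∀ a, β a * χ a a = α' a * E a := by
    intro a
    have h := heq a a a
    rw [hmink_diag] at h
    linarith
  -- L0 : 2 β_a² χ_ab = E a (α'_b β_a − α'_a β_b)
  have L0 : ∀ a b, a ≠ b → 2 * (β a) ^ 2 * χ a b = E a * (α' b * β a - α' a * β b) := by
    intro a b hab
    have h1 := heq a a b
    rw [hmink_off a b hab, hmink_off b a hab.symm, hmink_diag a, hχ b a] at h1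
    linear_combination β a * h1 - β b * hdiag a
  -- L1 : pair relation
  have L1 : ∀ a b, a ≠ b →
      (α' b * β a - α' a * β b) * (E a * (β b) ^ 2 + E b * (β a) ^ 2) = 0 := by
    intro a b hab
    linear_combination (β a) ^ 2 * (L0 b a hab.symm) - (β b) ^ 2 * (L0 a b hab)
      + 2 * (β a) ^ 2 * (β b) ^ 2 * (hχ a b)
  -- a third index always exists
  have hthird : ∀ x y : Fin (d + 3), ∃ c, c ≠ x ∧ c ≠ y := by
    intro x y
    by_contra h
    push_neg at h
    have hsub : (Finset.univ : Finset (Fin (d + 3))) ⊆ {x, y} := by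
      intro c _
      simp only [Finset.mem_insert, Finset.mem_singleton]
      by_cases hc : c = x
      · exact Or.inl hc
      · exact Or.inr (h c hc)
    have hcard := Finset.card_le_card hsub
    have h2 : ({x, y} : Finset (Fin (d + 3))).card ≤ 2 :=
      Finset.card_insert_le _ _ |>.trans (by simp)
    simp [Finset.card_univ] at hcard
    omega
  -- main claim: α' is proportional to β
  have Hmain : ∀ b, α' b * β p = α' p * β b := by
    intro b
    by_cases hbp : b = p
    · subst hbp; ring
    by_cases hfac : E p * (β b) ^ 2 + E b * (β p) ^ 2 = 0
    · -- hard case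
      have hEcases : ∀ x : Fin (d + 3), E x = -1 ∨ E x = 1 := by
        intro x; simp only [hE]; split <;> simp
      have hE0 : ∀ x : Fin (d + 3), x ≠ 0 → E x = 1 := by
        intro x hx; simp [hE, hx]
      have hEz : E (0 : Fin (d + 3)) = -1 := by simp [hE]
      -- one of p, b is 0
      have h0 : p = 0 ∨ b = 0 := by
        by_contra hcon
        push_neg at hcon
        rw [hE0 p hcon.1, hE0 b hcon.2] at hfac
        have hpp : 0 < (β p) ^ 2 := by positivity
        nlinarith [sq_nonneg (β b)]
      have hβb : β b ≠ 0 := by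
        intro hz
        have hpp : 0 < (β p) ^ 2 := by positivity
        rcases hEcases b with h | h <;>
        · rw [hz, h] at hfac
          nlinarith
      obtain ⟨c, hcp, hcb⟩ := hthird p b
      have hc0 : c ≠ 0 := by
        rcases h0 with h | h
        · rw [← h]; exact hcp
        · rw [← h]; exact hcb
      have hEc : E c = 1 := hE0 c hc0
      by_cases hβc : β c = 0
      · -- use equations (c,c,p) and (c,c,b)
        have h1 := heq c c p
        have h2 := heq c c b
        rw [hmink_off c p hcp, hmink_off p c hcp.symm, hmink_diag c, hEc] at h1
        rw [hmink_off c b hcb, hmink_off b c hcb.symm, hmink_diag c, hEc] at h2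
        rw [hβc] at h1 h2
        linear_combination β b * h1 - β p * h2
      · -- the triple equation
        have hpb : p ≠ b := fun h => hbp h.symm
        have hpc : p ≠ c := hcp.symm
        have hbc : b ≠ c := hcb.symm
        have h3 := heq p b c
        rw [hmink_off b c hbc, hmink_off c p hcp, hmink_off p b hpb] at h3
        rw [hχ c p] at h3
        have L0bc := L0 b c hbc
        have L0pc := L0 p c hpc
        have L0pb := L0 p b hpb
        rcases h0 with h0p | h0b
        · -- p = 0 : E p = -1, E b = 1
          have hEp : E p = -1 := by rw [h0p]; exact hEz
          have hEb : E b = 1 := hE0 b (by rw [← h0p]; exact hbp)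
          rw [hEp] at L0pc L0pb
          rw [hEb] at L0bc
          have hDbc : α' c * β b - α' b * β c = 0 := by
            have := L1 b c hbc
            rw [hEb, hEc] at this
            rcases mul_eq_zero.mp this with h | h
            · exact h
            · exfalso
              have hbb : 0 < (β b) ^ 2 := by positivity
              nlinarith [sq_nonneg (β c)]
          have key : 2 * (β b) ^ 2 * β c * (α' b * β p - α' p * β b) = 0 := by
            linear_combination (-(2 * (β p) ^ 2 * (β b) ^ 2)) * h3 + (β p) ^ 3 * L0bc
              + (β b) ^ 3 * L0pc + (β b) ^ 2 * β c * L0pb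
              + ((β p) ^ 3 - (β b) ^ 2 * β p) * hDbc
          have hne : 2 * (β b) ^ 2 * β c ≠ 0 := by positivity
          have := (mul_eq_zero.mp key).resolve_left hne
          linarith
        · -- b = 0 : E b = -1, E p = 1
          have hEb : E b = -1 := by rw [h0b]; exact hEz
          have hEp : E p = 1 := hE0 p (by rw [← h0b]; exact hpb)
          rw [hEp] at L0pc L0pb
          rw [hEb] at L0bc
          have hsq : (β b) ^ 2 = (β p) ^ 2 := by
            rw [hEp, hEb] at hfac; linarith
          have key : 2 * (β b) ^ 2 * β c * (α' b * β p - α' p * β b) = 0 := by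
            linear_combination (2 * (β p) ^ 2 * (β b) ^ 2) * h3 - (β p) ^ 3 * L0bc
              - (β b) ^ 3 * L0pc - (β b) ^ 2 * β c * L0pb
              - (β p * (α' c * β b - α' b * β c)) * hsq
          have hne : 2 * (β b) ^ 2 * β c ≠ 0 := by positivity
          have := (mul_eq_zero.mp key).resolve_left hne
          linarith
    · -- easy case
      have := L1 p b (fun h => hbp h.symm)
      have h := (mul_eq_zero.mp this).resolve_right hfac
      linarith
  -- now conclude
  refine ⟨α' p / β p, ?_, ?_⟩
  · -- χ = c₀ η
    have Hχ0 : ∀ b, b ≠ p → χ p b = 0 := by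
      intro b hb
      have h := L0 p b (fun h => hb h.symm)
      have h2 : 2 * (β p) ^ 2 * χ p b = 0 := by
        linear_combination h + E p * (Hmain b)
      have hne : 2 * (β p) ^ 2 ≠ 0 := by positivity
      exact (mul_eq_zero.mp h2).resolve_left hne
    intro a b
    by_cases hab : a = b
    · subst hab
      rw [hmink_diag]
      by_cases hap : a = p
      · subst hap
        have := hdiag a
        field_simp
        linarith
      · have h := heq p a a
        rw [hmink_diag a, hmink_off a p hap, hmink_off p a (fun h => hap h.symm)] at h
        rw [hχ a p, Hχ0 a hap] at h
        field_simp
        linarith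
    · rw [hmink_off a b hab, mul_zero]
      by_cases hap : a = p
      · subst hap; exact Hχ0 b (fun h => hab h.symm)
      · by_cases hbp : b = p
        · subst hbp; rw [hχ]; exact Hχ0 a hap
        · have h := heq p a b
          rw [hmink_off a b hab, hmink_off b p hbp, hmink_off p a (fun h => hap h.symm)] at h
          rw [hχ b p, Hχ0 b hbp, Hχ0 a hap] at h
          have : β p * χ a b = 0 := by linarith
          exact (mul_eq_zero.mp this).resolve_left hp
  · intro a
    have := Hmain a
    field_simp
    linarith

end
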